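/- Fix s ∈ [1,∞) and a formal power series φ = ∑_{|α|≥1} d_α Z_α with d_α ≥ 0 and d_{g_i} > 0 for each i. Define ψ_s := (1-φ)^{-s} = 1 + ∑_{k=1}^∞ C(s+k-1, k) φ^k, with coefficients b_α = ∑_{j=1}^{|α|} C(s+j-1,j) ∑_{γ_1⋯γ_j=α, |γ_i|≥1} d_{γ_1}⋯d_{γ_j} for |α| ≥ 1 and b_{g_0}=1. Then b_{g_i α} ≥ d_{g_i} b_α and b_{α g_i} ≥ d_{g_i} b_α for every word α and every i; in particular b_α/b_{g_iα} ≤ 1/d_{g_i} and b_α/b_{αg_i} ≤ 1/d_{g_i}. -/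

import Mathlib

noncomputable section

/-- Words over the alphabet `Fin n`: elements of the free monoid `F_n^+`. -/
abbrev Word (n : ℕ) := List (Fin n)

/-- The generalized binomial coefficient `C(s+j-1, j) = s(s+1)⋯(s+j-1)/j!`. -/
def genBinom (s : ℝ) (j : ℕ) : ℝ :=
  (∏ t ∈ Finset.range j, (s + t)) / (Nat.factorial j)

/-- The `i`-th piece of the decomposition of the word `α` according to the
composition `c` of `α.length` into nonempty blocks. -/
def piece {n : ℕ} (α : Word n) {m : ℕ} (c : Composition m) (i : Fin c.length) : Word n :=
  (α.drop (c.sizeUpTo i)).take (c.blocksFun i)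

lemma genBinom_pos {s : ℝ} (hs : 1 ≤ s) (j : ℕ) : 0 < genBinom s j := by
  unfold genBinom
  apply div_pos
  · apply Finset.prod_pos
    intro t _
    have : (0:ℝ) ≤ t := Nat.cast_nonneg t
    linarith
  · exact_mod_cast Nat.factorial_pos j

lemma genBinom_mono {s : ℝ} (hs : 1 ≤ s) (j : ℕ) : genBinom s j ≤ genBinom s (j+1) := by
  have hj : (0:ℝ) ≤ (j:ℝ) := Nat.cast_nonneg j
  have h1 : genBinom s (j+1) = genBinom s j * ((s + j)/(j+1)) := by
    unfold genBinom
    rw [Finset.prod_range_succ, Nat.factorial_succ]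
    have : ((j+1).factorial : ℝ) ≠ 0 := by positivity
    push_cast
    field_simp
  rw [h1]
  nth_rewrite 1 [← mul_one (genBinom s j)]
  apply mul_le_mul_of_nonneg_left _ (genBinom_pos hs j).le
  rw [le_div_iff₀ (by positivity)]
  linarith

def prependC {m : ℕ} (c : Composition m) : Composition (m+1) :=
  ⟨1 :: c.blocks, by
    intro i hi
    rcases List.mem_cons.1 hi with h | h
    · omega
    · exact c.blocks_pos h,
   by simp [c.blocks_sum, Nat.add_comm]⟩

def appendC {m : ℕ} (c : Composition m) {m' : ℕ} (h : m' = m + 1) : Composition m' :=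
  ⟨c.blocks ++ [1], by
    intro i hi
    rcases List.mem_append.1 hi with h | h
    · exact c.blocks_pos h
    · simp at h; omega,
   by subst h; simp [c.blocks_sum]⟩

lemma prependC_length {m : ℕ} (c : Composition m) : (prependC c).length = c.length + 1 := rfl

lemma appendC_length {m m' : ℕ} (c : Composition m) (h : m' = m + 1) :
    (appendC c h).length = c.length + 1 := by
  simp [appendC, Composition.length]

lemma prependC_inj {m : ℕ} : Function.Injective (prependC (m := m)) := by
  intro c1 c2 h
  have : (prependC c1).blocks = (prependC c2).blocks := by rw [h]
  simp only [prependC] at this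
  exact Composition.ext (by simpa using this)

lemma appendC_inj {m m' : ℕ} (h : m' = m + 1) :
    Function.Injective (fun c : Composition m => appendC c h) := by
  intro c1 c2 hc
  have : (appendC c1 h).blocks = (appendC c2 h).blocks := congrArg Composition.blocks hc
  simp only [appendC] at this
  exact Composition.ext (by simpa using this)

lemma piece_prependC_zero {n m : ℕ} (α : Word n) (i : Fin n) (c : Composition m) :
    piece (i::α) (prependC c) (0 : Fin (c.length + 1)) = [i] := by
  simp [piece, prependC, Composition.sizeUpTo, Composition.blocksFun]

lemma piece_prependC_succ {n m : ℕ} (α : Word n) (i : Fin n) (c : Composition m)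
    (j : Fin c.length) :
    piece (i::α) (prependC c) (j.succ : Fin (c.length + 1)) = piece α c j := by
  have h1 : (prependC c).sizeUpTo ((j : ℕ) + 1) = c.sizeUpTo j + 1 := by
    simp [prependC, Composition.sizeUpTo, List.take_cons, Nat.add_comm]
  have h2 : (prependC c).blocksFun (j.succ : Fin (c.length+1)) = c.blocksFun j := by
    simp [prependC, Composition.blocksFun]
  simp only [piece, h2, Fin.val_succ, h1]
  rw [List.drop_succ_cons]

lemma piece_appendC_of_lt {n m : ℕ} (α : Word n) (hm : α.length = m) (i : Fin n)
    (c : Composition m) (h : (α ++ [i]).length = m + 1)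
    (x : Fin (appendC c h).length) (j : Fin c.length) (hx : (x : ℕ) = (j : ℕ)) :
    piece (α ++ [i]) (appendC c h) x = piece α c j := by
  have hj : (j : ℕ) < c.blocks.length := j.2
  have h1 : (appendC c h).sizeUpTo x = c.sizeUpTo j := by
    simp only [Composition.sizeUpTo, appendC, hx]
    rw [List.take_append_of_le_length hj.le]
  have h2 : (appendC c h).blocksFun x = c.blocksFun j := by
    simp only [Composition.blocksFun, appendC, List.get_eq_getElem, hx]
    show (c.blocks ++ [1])[(x : ℕ)]'x.2 = _
    simp only [hx]
    exact List.getElem_append_left hj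
  have hsle : c.sizeUpTo j + c.blocksFun j ≤ m := by
    rw [← c.sizeUpTo_succ' j]
    exact c.sizeUpTo_le _
  simp only [piece, h1, h2]
  rw [List.drop_append_of_le_length (by omega),
      List.take_append_of_le_length (by simp [List.length_drop, hm]; omega)]

lemma piece_appendC_last {n m : ℕ} (α : Word n) (hm : α.length = m) (i : Fin n)
    (c : Composition m) (h : (α ++ [i]).length = m + 1)
    (x : Fin (appendC c h).length) (hx : (x : ℕ) = c.length) :
    piece (α ++ [i]) (appendC c h) x = [i] := by
  have h1 : (appendC c h).sizeUpTo x = m := by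
    simp only [Composition.sizeUpTo, appendC, hx]
    rw [List.take_append_of_le_length (le_refl _), List.take_length, c.blocks_sum]
  have h2 : (appendC c h).blocksFun x = 1 := by
    simp only [Composition.blocksFun, appendC, List.get_eq_getElem, hx]
    show (c.blocks ++ [1])[(x : ℕ)]'x.2 = _
    simp only [hx]
    rw [List.getElem_append_right (by simp [Composition.length])]
    simp [Composition.length]
  simp only [piece, h1, h2]
  rw [← hm, List.drop_left]
  simp

lemma prod_piece_prependC {n m : ℕ} (α : Word n) (i : Fin n) (c : Composition m)
    (d : Word n → ℝ) :
    ∏ j : Fin (prependC c).length, d (piece (i :: α) (prependC c) j)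
      = d [i] * ∏ j : Fin c.length, d (piece α c j) := by
  show (∏ j : Fin (c.length + 1), d (piece (i :: α) (prependC c) j)) = _
  rw [Fin.prod_univ_succ, piece_prependC_zero]
  congr 1
  exact Finset.prod_congr rfl fun j _ => by rw [piece_prependC_succ]

lemma prod_piece_appendC {n m : ℕ} (α : Word n) (hm : α.length = m) (i : Fin n)
    (c : Composition m) (h : (α ++ [i]).length = m + 1) (d : Word n → ℝ) :
    ∏ j : Fin (appendC c h).length, d (piece (α ++ [i]) (appendC c h) j)
      = (∏ j : Fin c.length, d (piece α c j)) * d [i] := by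
  have hl : c.length + 1 = (appendC c h).length := (appendC_length c h).symm
  rw [← Fin.prod_congr' (fun j => d (piece (α ++ [i]) (appendC c h) j)) hl,
      Fin.prod_univ_castSucc]
  congr 1
  · exact Finset.prod_congr rfl fun j _ => by
      rw [piece_appendC_of_lt α hm i c h _ j (by simp)]
  · rw [piece_appendC_last α hm i c h _ (by simp)]

lemma div_aux {a x t : ℝ} (ha : 0 ≤ a) (ht : 0 < t) (h : t * a ≤ x) : a / x ≤ 1 / t := by
  rcases eq_or_lt_of_le (le_trans (by positivity) h) with hx | hx
  · have ha0 : a = 0 := by nlinarith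
    rw [ha0, zero_div]
    positivity
  · rw [div_le_div_iff₀ hx ht]
    nlinarith


/-- fix `s ≥ 1` and `φ = ∑_{|α|≥1} d_α Z_α` with `d_α ≥ 0`, `d_{g_i} > 0`.
The coefficients of `ψ_s = (1-φ)^{-s}` are `b_{g₀}=1` and
`b_α = ∑_{j=1}^{|α|} C(s+j-1,j) ∑_{γ₁⋯γ_j=α, |γ_i|≥1} d_{γ₁}⋯d_{γ_j}` (the inner sums
being parametrized by compositions of `α.length`).  Then `b_{g_iα} ≥ d_{g_i} b_α` and
`b_{αg_i} ≥ d_{g_i} b_α`; in particular `b_α/b_{g_iα} ≤ 1/d_{g_i}` and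
`b_α/b_{αg_i} ≤ 1/d_{g_i}`. -/
theorem stmt10 {n : ℕ} (s : ℝ) (hs : 1 ≤ s) (d : Word n → ℝ)
    (hd : ∀ α, 0 ≤ d α) (hdg : ∀ i : Fin n, 0 < d [i])
    (b : Word n → ℝ) (hb0 : b [] = 1)
    (hb : ∀ α : Word n, α ≠ [] → b α = ∑ c : Composition α.length,
        genBinom s c.length * ∏ i : Fin c.length, d (piece α c i)) :
    ∀ (α : Word n) (i : Fin n),
      (d [i] * b α ≤ b (i :: α)) ∧ (d [i] * b α ≤ b (α ++ [i])) ∧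
      (b α / b (i :: α) ≤ 1 / d [i]) ∧ (b α / b (α ++ [i]) ≤ 1 / d [i]) := by
  classical
  have hb' : ∀ α : Word n, b α = ∑ c : Composition α.length,
      genBinom s c.length * ∏ i : Fin c.length, d (piece α c i) := by
    intro α
    rcases eq_or_ne α [] with rfl | h
    · rw [hb0]
      have hterm : ∀ c : Composition (List.length ([] : Word n)),
          genBinom s c.length * ∏ i : Fin c.length, d (piece [] c i) = 1 := by
        intro c
        have hbl : c.blocks = [] := by
          cases hc : c.blocks with
          | nil => rfl
          | cons a l =>
            have h1 : 0 < a := c.blocks_pos (by rw [hc]; exact List.mem_cons_self)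
            have h2 := c.blocks_sum
            rw [hc] at h2
            simp at h2
            omega
        have hl : c.length = 0 := by simp [Composition.length, hbl]
        haveI : IsEmpty (Fin c.length) := by rw [hl]; infer_instance
        rw [Finset.univ_eq_empty, Finset.prod_empty, hl]
        simp [genBinom]
      rw [Finset.sum_congr rfl (fun c _ => hterm c), Finset.sum_const, nsmul_eq_mul, mul_one]
      rw [Finset.card_univ, composition_card]
      norm_num
    · exact hb α h
  have htn : ∀ {m : ℕ} (β : Word n) (c : Composition m),
      0 ≤ genBinom s c.length * ∏ j : Fin c.length, d (piece β c j) := fun β c =>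
    mul_nonneg (genBinom_pos hs _).le (Finset.prod_nonneg fun j _ => hd _)
  have hbnn : ∀ α : Word n, 0 ≤ b α := fun α =>
    (hb' α) ▸ Finset.sum_nonneg (fun c _ => htn α c)
  have keyP : ∀ (α : Word n) (i : Fin n), d [i] * b α ≤ b (i :: α) := by
    intro α i
    rw [hb' α, hb' (i :: α), Finset.mul_sum]
    have hsub : ∀ c : Composition α.length,
        d [i] * (genBinom s c.length * ∏ j : Fin c.length, d (piece α c j))
          ≤ genBinom s (prependC c).length *
              ∏ j : Fin (prependC c).length, d (piece (i :: α) (prependC c) j) := by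
      intro c
      rw [prod_piece_prependC, prependC_length]
      have h1 := genBinom_mono hs c.length
      have h2 := (genBinom_pos hs c.length).le
      have hp : (0:ℝ) ≤ ∏ j : Fin c.length, d (piece α c j) :=
        Finset.prod_nonneg fun j _ => hd _
      have hdi := hd [i]
      calc d [i] * (genBinom s c.length * ∏ j : Fin c.length, d (piece α c j))
          = genBinom s c.length * (d [i] * ∏ j : Fin c.length, d (piece α c j)) := by ring
        _ ≤ genBinom s (c.length + 1) * (d [i] * ∏ j : Fin c.length, d (piece α c j)) :=
            mul_le_mul_of_nonneg_right h1 (by positivity)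
    calc ∑ c : Composition α.length,
          d [i] * (genBinom s c.length * ∏ j : Fin c.length, d (piece α c j))
        ≤ ∑ c : Composition α.length, genBinom s (prependC c).length *
            ∏ j : Fin (prependC c).length, d (piece (i :: α) (prependC c) j) :=
          Finset.sum_le_sum fun c _ => hsub c
      _ = ∑ c' ∈ Finset.univ.image prependC,
            genBinom s c'.length * ∏ j : Fin c'.length, d (piece (i :: α) c' j) :=
          by
            exact (Finset.sum_image
              (f := fun c' : Composition ((i :: α).length) =>
                genBinom s c'.length * ∏ j : Fin c'.length, d (piece (i :: α) c' j))
              (g := prependC) (fun a _ b _ hab => prependC_inj hab)).symm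
      _ ≤ ∑ c' : Composition (i :: α).length,
            genBinom s c'.length * ∏ j : Fin c'.length, d (piece (i :: α) c' j) :=
          Finset.sum_le_sum_of_subset_of_nonneg (Finset.subset_univ _)
            (fun c' _ _ => htn (i :: α) c')
  have keyA : ∀ (α : Word n) (i : Fin n), d [i] * b α ≤ b (α ++ [i]) := by
    intro α i
    have hlen : (α ++ [i]).length = α.length + 1 := by simp
    rw [hb' α, hb' (α ++ [i]), Finset.mul_sum]
    have hsub : ∀ c : Composition α.length,
        d [i] * (genBinom s c.length * ∏ j : Fin c.length, d (piece α c j))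
          ≤ genBinom s (appendC c hlen).length *
              ∏ j : Fin (appendC c hlen).length, d (piece (α ++ [i]) (appendC c hlen) j) := by
      intro c
      rw [prod_piece_appendC α rfl i c hlen, appendC_length]
      have h1 := genBinom_mono hs c.length
      have h2 := (genBinom_pos hs c.length).le
      have hp : (0:ℝ) ≤ ∏ j : Fin c.length, d (piece α c j) :=
        Finset.prod_nonneg fun j _ => hd _
      have hdi := hd [i]
      calc d [i] * (genBinom s c.length * ∏ j : Fin c.length, d (piece α c j))
          = genBinom s c.length * ((∏ j : Fin c.length, d (piece α c j)) * d [i]) := by ring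
        _ ≤ genBinom s (c.length + 1) * ((∏ j : Fin c.length, d (piece α c j)) * d [i]) :=
            mul_le_mul_of_nonneg_right h1 (by positivity)
    calc ∑ c : Composition α.length,
          d [i] * (genBinom s c.length * ∏ j : Fin c.length, d (piece α c j))
        ≤ ∑ c : Composition α.length, genBinom s (appendC c hlen).length *
            ∏ j : Fin (appendC c hlen).length, d (piece (α ++ [i]) (appendC c hlen) j) :=
          Finset.sum_le_sum fun c _ => hsub c
      _ = ∑ c' ∈ Finset.univ.image (fun c => appendC c hlen),
            genBinom s c'.length * ∏ j : Fin c'.length, d (piece (α ++ [i]) c' j) :=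
          by
            exact (Finset.sum_image
              (f := fun c' : Composition ((α ++ [i]).length) =>
                genBinom s c'.length * ∏ j : Fin c'.length, d (piece (α ++ [i]) c' j))
              (g := fun c => appendC c hlen) (fun a _ b _ hab => appendC_inj hlen hab)).symm
      _ ≤ ∑ c' : Composition (α ++ [i]).length,
            genBinom s c'.length * ∏ j : Fin c'.length, d (piece (α ++ [i]) c' j) :=
          Finset.sum_le_sum_of_subset_of_nonneg (Finset.subset_univ _)
            (fun c' _ _ => htn (α ++ [i]) c')
  intro α i
  exact ⟨keyP α i, keyA α i, div_aux (hbnn α) (hdg i) (keyP α i),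
    div_aux (hbnn α) (hdg i) (keyA α i)⟩
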